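/- arXiv:1111.5140 — 4 statements merged into one kernel-verified Lean document; each statement's English description precedes it below -/
import Mathlib

section
/- Let τ > 0, let s : [0,∞) → ℝ be differentiable with |s'(t)| ≤ Kε for all t ≥ 0 (K a constant, ε > 0), and let z solve z'(t) = -z(t)/τ + s'(t) with |z(0)| ≤ C₀ε^δ. Assume e^{-t/τ} ≤ C e^{-t ε^{1-δ}/C} for all t ≥ 0 (with C ≥ 1, 0 < δ < 1). Then sup_{t ≥ 0} |z(t)| ≤ C₀ε^δ + CKC ε^δ, i.e. |z(t)| = O(ε^δ) uniformly in t. -/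
open Real

/-- Scalar version: if `z' = -z/τ + s'` with `|s'(t)| ≤ Kε`, `|z(0)| ≤ C₀ε^δ`,
and the semigroup bound `e^{-t/τ} ≤ C e^{-tε^{1-δ}/C}` holds, then
`|z(t)| ≤ C₀ε^δ + C·K·C·ε^δ` for all `t ≥ 0`. -/
theorem stmt5 (τ ε δ K C C₀ : ℝ) (hτ : 0 < τ) (hε : 0 < ε)
    (hδ : 0 < δ) (hδ1 : δ < 1) (hC : 1 ≤ C) (hK : 0 ≤ K) (hC₀ : 0 ≤ C₀)
    (s s' z : ℝ → ℝ)
    (hs : ∀ t ≥ (0 : ℝ), HasDerivAt s (s' t) t)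
    (hs' : ∀ t ≥ (0 : ℝ), |s' t| ≤ K * ε)
    (hz : ∀ t ≥ (0 : ℝ), HasDerivAt z (-(z t) / τ + s' t) t)
    (hz0 : |z 0| ≤ C₀ * ε ^ δ)
    (hdecay : ∀ t ≥ (0 : ℝ), Real.exp (-t / τ) ≤ C * Real.exp (-t * ε ^ (1 - δ) / C)) :
    ∀ t ≥ (0 : ℝ), |z t| ≤ C₀ * ε ^ δ + C * K * C * ε ^ δ := by
  have hCpos : (0 : ℝ) < C := lt_of_lt_of_le one_pos hC
  have hεrp : (0 : ℝ) < ε ^ (1 - δ) := Real.rpow_pos_of_pos hε _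
  have hεδ : (0 : ℝ) < ε ^ δ := Real.rpow_pos_of_pos hε _
  -- Step 1: from the decay hypothesis, τ * ε^(1-δ) ≤ C.
  have hτC : τ * ε ^ (1 - δ) ≤ C := by
    by_contra h
    push_neg at h
    set a : ℝ := ε ^ (1 - δ) / C with ha
    set b : ℝ := 1 / τ with hb
    have hab : b < a := by
      rw [ha, hb, div_lt_div_iff₀ hτ hCpos]
      linarith
    set t : ℝ := (Real.log C + 1) / (a - b) with ht
    have hlogC : 0 ≤ Real.log C := Real.log_nonneg hC
    have htpos : 0 < t := div_pos (by linarith) (by linarith)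
    have hd := hdecay t (le_of_lt htpos)
    have h1 : Real.exp (-t / τ) = Real.exp (-(t * b)) := by
      rw [hb]; ring_nf
    have h2 : C * Real.exp (-t * ε ^ (1 - δ) / C) = C * Real.exp (-(t * a)) := by
      rw [ha]; ring_nf
    rw [h1, h2] at hd
    have h3 : Real.exp (t * (a - b)) ≤ C := by
      have e1 : Real.exp (t * (a - b)) = Real.exp (-(t * b)) * Real.exp (t * a) := by
        rw [← Real.exp_add]; ring_nf
      rw [e1]
      calc Real.exp (-(t * b)) * Real.exp (t * a)
          ≤ C * Real.exp (-(t * a)) * Real.exp (t * a) :=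
            mul_le_mul_of_nonneg_right hd (Real.exp_pos _).le
        _ = C := by rw [mul_assoc, ← Real.exp_add]; simp
    have h4 : t * (a - b) = Real.log C + 1 := by
      rw [ht, div_mul_cancel₀]
      exact ne_of_gt (by linarith)
    rw [h4, Real.exp_add, Real.exp_log hCpos] at h3
    nlinarith [Real.exp_one_gt_d9]
  -- Step 2: |z t| ≤ max (C₀ ε^δ) (τ K ε) for all t ≥ 0.
  set M : ℝ := max (C₀ * ε ^ δ) (τ * K * ε) with hM
  have hMz0 : |z 0| ≤ M := le_trans hz0 (le_max_left _ _)
  have key : ∀ t ≥ (0 : ℝ), |z t| ≤ M := by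
    intro t ht
    have hη : ∀ η > (0 : ℝ), |z t| ≤ M + η := by
      intro η hηpos
      have hcont : ContinuousOn z (Set.Icc 0 t) := fun x hx =>
        (hz x hx.1).continuousAt.continuousWithinAt
      have hderiv : ∀ x ∈ Set.Ico (0 : ℝ) t,
          HasDerivWithinAt z (-(z x) / τ + s' x) (Set.Ici x) x := fun x hx =>
        (hz x hx.1).hasDerivWithinAt
      have hτKε : τ * K * ε ≤ M := le_max_right _ _
      have hbound : ∀ x ∈ Set.Ico (0 : ℝ) t, |s' x| ≤ K * ε := fun x hx => hs' x hx.1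
      have h5 : -(M + η) / τ + K * ε < 0 := by
        have h5' : K * ε * τ < M + η := by nlinarith
        have h5'' : K * ε < (M + η) / τ := (lt_div_iff₀ hτ).mpr h5'
        have : -(M + η) / τ = -((M + η) / τ) := by ring
        linarith [this.le, this.ge]
      -- upper bound
      have hub : ∀ x ∈ Set.Icc (0 : ℝ) t, z x ≤ M + η := by
        refine image_le_of_deriv_right_lt_deriv_boundary hcont hderiv ?_
          (B' := fun _ => (0 : ℝ)) (fun x => hasDerivAt_const x (M + η)) ?_
        · have := le_trans (le_abs_self _) hMz0; linarith
        · intro x hx hx2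
          show -(z x) / τ + s' x < 0
          have hs'x : s' x ≤ K * ε := le_trans (le_abs_self _) (hbound x hx)
          have : -(z x) / τ = -(M + η) / τ := by rw [hx2]
          linarith
      -- lower bound
      have hlb : ∀ x ∈ Set.Icc (0 : ℝ) t, -z x ≤ M + η := by
        refine image_le_of_deriv_right_lt_deriv_boundary
          (f := fun u => -z u) (f' := fun u => -(-(z u) / τ + s' u)) hcont.neg
          (fun x hx => ((hz x hx.1).neg).hasDerivWithinAt) ?_
          (B' := fun _ => (0 : ℝ)) (fun x => hasDerivAt_const x (M + η)) ?_
        · show -z 0 ≤ M + η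
          have := le_trans (neg_le_abs _) hMz0; linarith
        · intro x hx hx2
          show -(-(z x) / τ + s' x) < 0
          have hzx : z x = -(M + η) := by
            have : -z x = M + η := hx2
            linarith
          have hs'x : -s' x ≤ K * ε := le_trans (neg_le_abs _) (hbound x hx)
          have heq : -(-(z x) / τ + s' x) = -(M + η) / τ + (-s' x) := by
            rw [hzx]; ring
          rw [heq]
          linarith
      rw [abs_le]
      have h6 := hub t ⟨ht, le_refl t⟩
      have h7 := hlb t ⟨ht, le_refl t⟩
      constructor <;> linarith
    by_contra h
    push_neg at h
    have := hη ((|z t| - M) / 2) (by linarith)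
    linarith
  -- Step 3: M ≤ C₀ ε^δ + C K C ε^δ.
  intro t ht
  refine le_trans (key t ht) ?_
  rw [hM, max_le_iff]
  have hpos : 0 ≤ C * K * C * ε ^ δ := by positivity
  constructor
  · linarith
  · have hεsplit : ε ^ (1 - δ) * ε ^ δ = ε := by
      rw [← Real.rpow_add hε]
      norm_num
    have heq : τ * K * ε = K * (τ * ε ^ (1 - δ)) * ε ^ δ := by
      linear_combination (-(τ * K)) * hεsplit
    rw [heq]
    have hCC : τ * ε ^ (1 - δ) ≤ C * C := le_trans hτC (by nlinarith)
    have h8 : K * (τ * ε ^ (1 - δ)) ≤ K * (C * C) := mul_le_mul_of_nonneg_left hCC hK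
    have h9 := mul_le_mul_of_nonneg_right h8 hεδ.le
    have h10 : K * (C * C) * ε ^ δ = C * K * C * ε ^ δ := by ring
    have h11 : 0 ≤ C₀ * ε ^ δ := by positivity
    linarith [h10.le, h10.ge]
end

section
/- Let τ > 0 and suppose sup_{t≥0} |t τ^{-1} e^{-t/τ}| ≤ C/ε and e^{-t/τ} ≤ C e^{-tε^{1-δ}/C} for all t ≥ 0. Let z solve z'(t) = -z(t)/τ + g(t) with |g(t)| ≤ Kε for all t, and suppose |τ^{-1}z(0)| ≤ C₀. Then sup_{t≥0} |τ^{-1} e^{-t/τ} z(t)| is bounded by a constant independent of ε. -/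
open Real

/-- Scalar version of Lemma lem:techbound: under the bounds
`sup_t |t τ⁻¹ e^{-t/τ}| ≤ C/ε` and `e^{-t/τ} ≤ C e^{-tε^{1-δ}/C}`, if
`z' = -z/τ + g` with `|g| ≤ Kε` and `|τ⁻¹ z(0)| ≤ C₀`, then
`|τ⁻¹ e^{-t/τ} z(t)|` is bounded by a constant independent of `ε`. -/
theorem stmt6 (τ ε δ K C C₀ : ℝ) (hτ : 0 < τ) (hε : 0 < ε) (hε1 : ε < 1)
    (hδ : 0 < δ) (hδ1 : δ < 1) (hC : 1 ≤ C) (hK : 0 ≤ K) (hC₀ : 0 ≤ C₀)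
    (g z : ℝ → ℝ)
    (hsup : ∀ t ≥ (0 : ℝ), |t * τ⁻¹ * Real.exp (-t / τ)| ≤ C / ε)
    (hdecay : ∀ t ≥ (0 : ℝ), Real.exp (-t / τ) ≤ C * Real.exp (-t * ε ^ (1 - δ) / C))
    (hz : ∀ t ≥ (0 : ℝ), HasDerivAt z (-(z t) / τ + g t) t)
    (hg : ∀ t ≥ (0 : ℝ), |g t| ≤ K * ε)
    (hz0 : |τ⁻¹ * z 0| ≤ C₀) :
    ∀ t ≥ (0 : ℝ), |τ⁻¹ * Real.exp (-t / τ) * z t| ≤ C₀ + C * C * K := by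
  intro t ht
  have hτ' : τ⁻¹ ≠ 0 := by positivity
  -- Gronwall estimate on [0, t]
  have hgron : |z t| ≤ gronwallBound |z 0| τ⁻¹ (K * ε) (t - 0) := by
    apply norm_le_gronwallBound_of_norm_deriv_right_le
      (f' := fun s => -(z s) / τ + g s)
    · intro s hs
      exact ((hz s hs.1).continuousAt).continuousWithinAt
    · intro s hs
      exact (hz s hs.1).hasDerivWithinAt
    · exact le_rfl
    · intro s hs
      calc ‖-(z s) / τ + g s‖ ≤ ‖-(z s) / τ‖ + ‖g s‖ := norm_add_le _ _
        _ ≤ τ⁻¹ * ‖z s‖ + K * ε := by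
            refine add_le_add (le_of_eq ?_) (hg s hs.1)
            rw [Real.norm_eq_abs, Real.norm_eq_abs, abs_div, abs_neg,
              abs_of_pos hτ, div_eq_inv_mul]
    · exact ⟨ht, le_rfl⟩
  rw [gronwallBound_of_K_ne_0 hτ'] at hgron
  simp only [sub_zero] at hgron
  have hexp : (0:ℝ) < Real.exp (-t / τ) := Real.exp_pos _
  have hexp1 : Real.exp (-t / τ) ≤ 1 := by
    apply Real.exp_le_one_iff.mpr
    have : 0 ≤ t / τ := by positivity
    simpa [neg_div] using neg_nonpos.mpr this
  have key : τ⁻¹ * Real.exp (-t / τ) * |z t| ≤ C₀ + K * ε := by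
    have hmul : τ⁻¹ * Real.exp (-t / τ) * |z t| ≤
        τ⁻¹ * Real.exp (-t / τ) * (|z 0| * Real.exp (τ⁻¹ * t) +
          K * ε / τ⁻¹ * (Real.exp (τ⁻¹ * t) - 1)) := by
      apply mul_le_mul_of_nonneg_left hgron
      positivity
    refine hmul.trans ?_
    have hb : Real.exp (τ⁻¹ * t) = (Real.exp (-t / τ))⁻¹ := by
      rw [← Real.exp_neg]
      congr 1
      field_simp
    have expand : τ⁻¹ * Real.exp (-t / τ) * (|z 0| * Real.exp (τ⁻¹ * t) +
          K * ε / τ⁻¹ * (Real.exp (τ⁻¹ * t) - 1))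
        = τ⁻¹ * |z 0| + K * ε * (1 - Real.exp (-t / τ)) := by
      rw [hb]
      field_simp
    rw [expand]
    have h1 : τ⁻¹ * |z 0| ≤ C₀ := by
      rwa [abs_mul, abs_of_pos (by positivity : (0:ℝ) < τ⁻¹)] at hz0
    have h2 : K * ε * (1 - Real.exp (-t / τ)) ≤ K * ε := by
      nlinarith [mul_nonneg (mul_nonneg hK hε.le) hexp.le]
    linarith
  have habs : |τ⁻¹ * Real.exp (-t / τ) * z t| = τ⁻¹ * Real.exp (-t / τ) * |z t| := by
    rw [abs_mul, abs_mul, abs_of_pos (by positivity : (0:ℝ) < τ⁻¹), abs_of_pos hexp]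
  rw [habs]
  refine key.trans ?_
  have h3 : K * ε ≤ K := by nlinarith
  have h4 : K ≤ C * C * K := by nlinarith [sq_nonneg (C - 1)]
  linarith
end

section
/- Let α : [0, 2T] → [0,∞) be continuous and strictly increasing with α(0) = 0, let X : [0,∞) → ℝ^d and X⁰ : [0,∞) → ℝ^d be continuous. Then for every T > 0, sup_{t ∈ [0,T]} min(|X(t) - X⁰(t)|, 1) ≤ sup_{s ∈ [0,2T]} min(|X(α(s)) - X⁰(s)|, 1) + sup_{s ∈ [0,2T]} min(|X⁰(α(s)) - X⁰(s)|, 1) + 2·𝟙[α(2T) ≤ T]. -/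
open Real

/-- Deterministic pathwise inequality behind the random time change lemma:
for a continuous strictly increasing time change `α` with `α(0) = 0`,
`sup_{[0,T]} min(|X - X⁰|,1)` is bounded by the two time-changed suprema on
`[0,2T]` plus `2·𝟙[α(2T) ≤ T]`. -/
theorem stmt10 (d : ℕ) (T : ℝ) (hT : 0 < T)
    (α : ℝ → ℝ)
    (hcont : ContinuousOn α (Set.Icc 0 (2 * T)))
    (hmono : StrictMonoOn α (Set.Icc 0 (2 * T)))
    (hα0 : α 0 = 0)
    (X X0 : ℝ → EuclideanSpace ℝ (Fin d))
    (hX : Continuous X) (hX0 : Continuous X0) :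
    ∀ t ∈ Set.Icc (0 : ℝ) T,
      min ‖X t - X0 t‖ 1
        ≤ (⨆ s : Set.Icc (0 : ℝ) (2 * T), min ‖X (α s) - X0 s‖ 1)
          + (⨆ s : Set.Icc (0 : ℝ) (2 * T), min ‖X0 (α s) - X0 s‖ 1)
          + 2 * (if α (2 * T) ≤ T then 1 else 0) := by
  intro t ht
  have h2T : (0:ℝ) ≤ 2 * T := by linarith
  haveI : Nonempty (Set.Icc (0:ℝ) (2 * T)) := ⟨⟨0, by constructor <;> linarith⟩⟩
  have hbdd1 : BddAbove (Set.range fun s : Set.Icc (0:ℝ) (2*T) =>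
      min ‖X (α s) - X0 s‖ 1) := ⟨1, by rintro x ⟨s, rfl⟩; exact min_le_right _ _⟩
  have hbdd2 : BddAbove (Set.range fun s : Set.Icc (0:ℝ) (2*T) =>
      min ‖X0 (α s) - X0 s‖ 1) := ⟨1, by rintro x ⟨s, rfl⟩; exact min_le_right _ _⟩
  have hnn : ∀ (v : EuclideanSpace ℝ (Fin d)), (0:ℝ) ≤ min ‖v‖ 1 := fun v => le_min (norm_nonneg _) zero_le_one
  by_cases hc : α (2 * T) ≤ T
  · -- indicator is 1
    have h1 : (0:ℝ) ≤ ⨆ s : Set.Icc (0:ℝ) (2*T), min ‖X (α s) - X0 s‖ 1 :=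
      le_trans (hnn _) (le_ciSup hbdd1 ⟨0, by constructor <;> linarith⟩)
    have h2 : (0:ℝ) ≤ ⨆ s : Set.Icc (0:ℝ) (2*T), min ‖X0 (α s) - X0 s‖ 1 :=
      le_trans (hnn _) (le_ciSup hbdd2 ⟨0, by constructor <;> linarith⟩)
    simp only [hc, if_true]
    have : min ‖X t - X0 t‖ 1 ≤ 1 := min_le_right _ _
    linarith
  · push_neg at hc
    simp only [not_le.mpr hc, if_false]
    -- find s with α s = t
    have hmem : t ∈ Set.Icc (α 0) (α (2*T)) := by
      constructor
      · rw [hα0]; exact ht.1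
      · exact le_of_lt (lt_of_le_of_lt ht.2 hc)
    obtain ⟨s, hs, hst⟩ := intermediate_value_Icc h2T hcont hmem
    set a := min ‖X (α s) - X0 s‖ 1 with ha
    set b := min ‖X0 (α s) - X0 s‖ 1 with hb
    have key : min ‖X t - X0 t‖ 1 ≤ a + b := by
      have htri : ‖X t - X0 t‖ ≤ ‖X (α s) - X0 s‖ + ‖X0 (α s) - X0 s‖ := by
        rw [← hst]
        calc ‖X (α s) - X0 (α s)‖ ≤ ‖X (α s) - X0 s‖ + ‖X0 s - X0 (α s)‖ :=
              norm_sub_le_norm_sub_add_norm_sub _ _ _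
          _ = ‖X (α s) - X0 s‖ + ‖X0 (α s) - X0 s‖ := by rw [norm_sub_rev (X0 s)]
      by_cases h1 : ‖X (α s) - X0 s‖ ≤ 1
      · by_cases h2 : ‖X0 (α s) - X0 s‖ ≤ 1
        · have : a = ‖X (α s) - X0 s‖ := min_eq_left h1
          have : b = ‖X0 (α s) - X0 s‖ := min_eq_left h2
          calc min ‖X t - X0 t‖ 1 ≤ ‖X t - X0 t‖ := min_le_left _ _
            _ ≤ _ := htri
            _ ≤ a + b := by rw [ha, hb, min_eq_left h1, min_eq_left h2]
        · have hb1 : b = 1 := min_eq_right (le_of_lt (not_le.mp h2))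
          have ha0 : (0:ℝ) ≤ a := hnn _
          calc min ‖X t - X0 t‖ 1 ≤ 1 := min_le_right _ _
            _ ≤ a + b := by rw [hb1]; linarith
      · have ha1 : a = 1 := min_eq_right (le_of_lt (not_le.mp h1))
        have hb0 : (0:ℝ) ≤ b := hnn _
        calc min ‖X t - X0 t‖ 1 ≤ 1 := min_le_right _ _
          _ ≤ a + b := by rw [ha1]; linarith
    have hA : a ≤ ⨆ s : Set.Icc (0:ℝ) (2*T), min ‖X (α s) - X0 s‖ 1 :=
      le_ciSup hbdd1 ⟨s, hs⟩
    have hB : b ≤ ⨆ s : Set.Icc (0:ℝ) (2*T), min ‖X0 (α s) - X0 s‖ 1 :=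
      le_ciSup hbdd2 ⟨s, hs⟩
    linarith
end

section
/- Let λ_min > 0 bound two measurable rates λ, λ̂ : [0,∞) → [λ_min, λ_max] from below, and let T, T̂ > 0 satisfy ∫₀^T λ(t) dt = ∫₀^{T̂} λ̂(t) dt = θ for the same θ > 0. Then |T - T̂| ≤ (1/λ_min) ∫₀^{min(T,T̂)} |λ(t) - λ̂(t)| dt. -/
open Real MeasureTheory intervalIntegral

private lemma stmt19_intInt (f : ℝ → ℝ) (hf : Measurable f) (C : ℝ)
    (hC : ∀ t ≥ (0:ℝ), |f t| ≤ C) (a b : ℝ) (ha : 0 ≤ a) (hb : 0 ≤ b) :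
    IntervalIntegrable f volume a b := by
  rw [intervalIntegrable_iff]
  apply MeasureTheory.Measure.integrableOn_of_bounded
  · exact measure_Ioc_lt_top.ne
  · exact hf.aestronglyMeasurable
  · refine (ae_restrict_iff' measurableSet_uIoc).2 (Filter.Eventually.of_forall ?_)
    intro t ht
    have : 0 ≤ t := le_of_lt (lt_of_le_of_lt (le_min ha hb) ht.1)
    simpa using hC t this

private lemma stmt19_key (lamMin lamMax θ T That : ℝ) (hmin : 0 < lamMin)
    (lam lamHat : ℝ → ℝ) (hm1 : Measurable lam) (hm2 : Measurable lamHat)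
    (hb1 : ∀ t ≥ (0 : ℝ), lamMin ≤ lam t ∧ lam t ≤ lamMax)
    (hb2 : ∀ t ≥ (0 : ℝ), lamMin ≤ lamHat t ∧ lamHat t ≤ lamMax)
    (hT : 0 < T) (hTT : T ≤ That)
    (hint1 : ∫ t in (0 : ℝ)..T, lam t = θ)
    (hint2 : ∫ t in (0 : ℝ)..That, lamHat t = θ) :
    That - T ≤ (1 / lamMin) * ∫ t in (0 : ℝ)..T, |lam t - lamHat t| := by
  have hmax : 0 < lamMax := lt_of_lt_of_le hmin ((hb1 0 le_rfl).1.trans (hb1 0 le_rfl).2)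
  have habs1 : ∀ t ≥ (0:ℝ), |lam t| ≤ lamMax := fun t ht => by
    rw [abs_le]; exact ⟨le_trans (by linarith) (hb1 t ht).1, (hb1 t ht).2⟩
  have habs2 : ∀ t ≥ (0:ℝ), |lamHat t| ≤ lamMax := fun t ht => by
    rw [abs_le]; exact ⟨le_trans (by linarith) (hb2 t ht).1, (hb2 t ht).2⟩
  have i1 : ∀ a b : ℝ, 0 ≤ a → 0 ≤ b → IntervalIntegrable lam volume a b :=
    fun a b ha hb => stmt19_intInt lam hm1 lamMax habs1 a b ha hb
  have i2 : ∀ a b : ℝ, 0 ≤ a → 0 ≤ b → IntervalIntegrable lamHat volume a b :=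
    fun a b ha hb => stmt19_intInt lamHat hm2 lamMax habs2 a b ha hb
  have hsplit : (∫ t in (0:ℝ)..T, lamHat t) + ∫ t in T..That, lamHat t = θ := by
    rw [integral_add_adjacent_intervals (i2 0 T le_rfl hT.le) (i2 T That hT.le (hT.le.trans hTT))]
    exact hint2
  have htail : ∫ t in T..That, lamHat t = ∫ t in (0:ℝ)..T, (lam t - lamHat t) := by
    rw [integral_sub (i1 0 T le_rfl hT.le) (i2 0 T le_rfl hT.le), hint1]
    linarith
  have hlow : lamMin * (That - T) ≤ ∫ t in T..That, lamHat t := by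
    have := intervalIntegral.integral_mono_on hTT (intervalIntegrable_const)
      (i2 T That hT.le (hT.le.trans hTT))
      (fun t ht => (hb2 t (hT.le.trans ht.1)).1)
    simpa [mul_comm] using this
  have hup : (∫ t in (0:ℝ)..T, (lam t - lamHat t)) ≤ ∫ t in (0:ℝ)..T, |lam t - lamHat t| := by
    apply intervalIntegral.integral_mono_on hT.le ((i1 0 T le_rfl hT.le).sub (i2 0 T le_rfl hT.le))
      (((i1 0 T le_rfl hT.le).sub (i2 0 T le_rfl hT.le)).abs)
    exact fun t _ => le_abs_self _
  have : lamMin * (That - T) ≤ ∫ t in (0:ℝ)..T, |lam t - lamHat t| := by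
    rw [← htail] at hup; linarith
  rw [div_mul_eq_mul_div, le_div_iff₀ hmin]
  linarith [this]

/-- Jump-time comparison inequality: if two rates `λ, λ̂` take values in
`[λ_min, λ_max]` and `∫₀^T λ = ∫₀^T̂ λ̂ = θ`, then
`|T - T̂| ≤ (1/λ_min) ∫₀^{T∧T̂} |λ - λ̂|`. -/
theorem stmt19 (lamMin lamMax θ T That : ℝ) (hmin : 0 < lamMin)
    (hle : lamMin ≤ lamMax)
    (lam lamHat : ℝ → ℝ) (hm1 : Measurable lam) (hm2 : Measurable lamHat)
    (hb1 : ∀ t ≥ (0 : ℝ), lamMin ≤ lam t ∧ lam t ≤ lamMax)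
    (hb2 : ∀ t ≥ (0 : ℝ), lamMin ≤ lamHat t ∧ lamHat t ≤ lamMax)
    (hθ : 0 < θ) (hT : 0 < T) (hThat : 0 < That)
    (hint1 : ∫ t in (0 : ℝ)..T, lam t = θ)
    (hint2 : ∫ t in (0 : ℝ)..That, lamHat t = θ) :
    |T - That| ≤ (1 / lamMin) * ∫ t in (0 : ℝ)..(min T That), |lam t - lamHat t| := by
  rcases le_total T That with h | h
  · rw [min_eq_left h, abs_sub_comm, abs_of_nonneg (by linarith)]
    exact stmt19_key lamMin lamMax θ T That hmin lam lamHat hm1 hm2 hb1 hb2 hT h hint1 hint2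
  · rw [min_eq_right h, abs_of_nonneg (by linarith)]
    have := stmt19_key lamMin lamMax θ That T hmin lamHat lam hm2 hm1 hb2 hb1 hThat h hint2 hint1
    simpa [abs_sub_comm] using this
end
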